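/- Let R = ⊕_{p≥0} R_p be a commutative ℕ-graded ring, F^aR := ⊕_{p≤a} R_p, and let y₁,…,yₙ ∈ R with yᵢ = xᵢ + (element of F^{kᵢ−1}R), where xᵢ ∈ R_{kᵢ} is homogeneous of degree kᵢ. Assume x₁,…,xₙ is an R-regular sequence in every order. Fix 1 ≤ l ≤ n, let q_l : R → R/(y₁,…,y_l) be the quotient map, and set F^aR_l := q_l(F^aR). Then for every a ∈ ℤ, the additive map R_a → F^aR_l / F^{a−1}R_l induced by q_l (sending x ∈ R_a to the class of q_l(x)) is surjective with kernel R_a ∩ (x₁,…,x_l); in particular it induces an isomorphism of additive groups R_a/(R_a ∩ (x₁,…,x_l)) ≅ F^aR_l / F^{a−1}R_l. -/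

import Mathlib

/-- A sequence (given as a list) `a₁, …, aₙ` in a commutative ring `A` is `A`-regular if for
each `i`, `aᵢ` is not a zero divisor on `A ⧸ (a₁, …, a_{i-1})`. -/
def IsRegularSeq {A : Type*} [CommRing A] (l : List A) : Prop :=
  ∀ (i : ℕ) (h : i < l.length), ∀ x : A,
    l.get ⟨i, h⟩ * x ∈ Ideal.span {y | y ∈ l.take i} →
      x ∈ Ideal.span {y | y ∈ l.take i}

/-- `Fmem 𝒜 a r` says that `r ∈ F^aR = ⊕_{p ≤ a} R_p`: all homogeneous components of `r`
of degree `> a` vanish. -/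
def Fmem {R : Type*} [CommRing R] (𝒜 : ℕ → AddSubgroup R) [GradedRing 𝒜] (a : ℤ)
    (r : R) : Prop :=
  ∀ p : ℕ, a < (p : ℤ) → (DirectSum.decompose 𝒜 r p : R) = 0

set_option linter.unusedSectionVars false
set_option linter.unusedTactic false
set_option linter.unusedVariables false

open DirectSum

section Aux
variable {R : Type*} [CommRing R] (𝒜 : ℕ → AddSubgroup R) [GradedRing 𝒜]

lemma Fmem_zero (a : ℤ) : Fmem 𝒜 a (0 : R) := fun p _ => by simp

variable {𝒜}

lemma Fmem.add {a : ℤ} {r s : R} (hr : Fmem 𝒜 a r) (hs : Fmem 𝒜 a s) : Fmem 𝒜 a (r + s) := by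
  intro p hp
  rw [decompose_add, DirectSum.add_apply, AddSubgroup.coe_add, hr p hp, hs p hp, add_zero]

lemma Fmem.neg {a : ℤ} {r : R} (hr : Fmem 𝒜 a r) : Fmem 𝒜 a (-r) := by
  intro p hp
  rw [decompose_neg]
  have := hr p hp
  rw [show (((-(decompose 𝒜 r)) p : 𝒜 p) : R) = -((decompose 𝒜 r p : 𝒜 p) : R) from rfl, this,
    neg_zero]

lemma Fmem.sub {a : ℤ} {r s : R} (hr : Fmem 𝒜 a r) (hs : Fmem 𝒜 a s) : Fmem 𝒜 a (r - s) := by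
  rw [sub_eq_add_neg]; exact hr.add hs.neg

lemma Fmem.mono {a b : ℤ} {r : R} (hab : a ≤ b) (hr : Fmem 𝒜 a r) : Fmem 𝒜 b r :=
  fun p hp => hr p (lt_of_le_of_lt hab hp)

lemma Fmem_sum {a : ℤ} {ι : Type*} (s : Finset ι) (f : ι → R)
    (hf : ∀ i ∈ s, Fmem 𝒜 a (f i)) : Fmem 𝒜 a (∑ i ∈ s, f i) := by
  classical
  induction s using Finset.induction_on with
  | empty => simpa using Fmem_zero 𝒜 a
  | @insert _ _ hx ih =>
    rw [Finset.sum_insert hx]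
    exact (hf _ (Finset.mem_insert_self _ _)).add
      (ih fun i hi => hf i (Finset.mem_insert_of_mem hi))

lemma Fmem_of_mem {p : ℕ} {r : R} (hr : r ∈ 𝒜 p) : Fmem 𝒜 (p : ℤ) r := by
  intro q hq
  exact decompose_of_mem_ne 𝒜 hr (by omega)

lemma Fmem_exists_nat (r : R) : ∃ m : ℕ, Fmem 𝒜 (m : ℤ) r := by
  classical
  refine ⟨(decompose 𝒜 r).support.sup id, fun p hp => ?_⟩
  have hp' : (decompose 𝒜 r).support.sup id < p := by exact_mod_cast hp
  have : p ∉ (decompose 𝒜 r).support := fun h => by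
    have := Finset.le_sup (f := id) h
    simp only [id] at this; omega
  rw [DFinsupp.notMem_support_iff.mp this]; rfl

lemma Fmem.mul {a b : ℤ} {r s : R} (hr : Fmem 𝒜 a r) (hs : Fmem 𝒜 b s) :
    Fmem 𝒜 (a + b) (r * s) := by
  classical
  intro p hp
  conv_lhs => rw [← DirectSum.sum_support_decompose 𝒜 r, ← DirectSum.sum_support_decompose 𝒜 s]
  rw [Finset.sum_mul_sum, decompose_sum, DFinsupp.finset_sum_apply, AddSubmonoidClass.coe_finset_sum]
  refine Finset.sum_eq_zero fun m hm => ?_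
  rw [decompose_sum, DFinsupp.finset_sum_apply, AddSubmonoidClass.coe_finset_sum]
  refine Finset.sum_eq_zero fun q hq => ?_
  have hma : (m : ℤ) ≤ a := by
    by_contra h
    exact (DFinsupp.mem_support_iff.mp hm) (Subtype.ext (hr m (by omega)))
  have hqb : (q : ℤ) ≤ b := by
    by_contra h
    exact (DFinsupp.mem_support_iff.mp hq) (Subtype.ext (hs q (by omega)))
  refine decompose_of_mem_ne 𝒜 (SetLike.mul_mem_graded (SetLike.coe_mem _) (SetLike.coe_mem _))
    (fun h => by omega)

lemma decompose_mul_right {k : ℕ} {x : R} (hx : x ∈ 𝒜 k) (r : R) (p : ℕ) :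
    (decompose 𝒜 (r * x) p : R) = if k ≤ p then (decompose 𝒜 r (p - k) : R) * x else 0 := by
  classical
  conv_lhs => rw [← DirectSum.sum_support_decompose 𝒜 r]
  rw [Finset.sum_mul, decompose_sum, DFinsupp.finset_sum_apply, AddSubmonoidClass.coe_finset_sum]
  have h1 : ∀ m ∈ (decompose 𝒜 r).support,
      (decompose 𝒜 ((decompose 𝒜 r m : R) * x) p : R)
        = if m = p - k ∧ k ≤ p then (decompose 𝒜 r m : R) * x else 0 := by
    intro m _
    have hmem : (decompose 𝒜 r m : R) * x ∈ 𝒜 (m + k) :=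
      SetLike.mul_mem_graded (SetLike.coe_mem _) hx
    by_cases h : m + k = p
    · rw [if_pos (by omega), ← h, decompose_of_mem_same 𝒜 hmem]
    · rw [if_neg (by omega), decompose_of_mem_ne 𝒜 hmem h]
  rw [Finset.sum_congr rfl h1]
  by_cases hk : k ≤ p
  · rw [if_pos hk]
    simp only [hk, and_true]
    rw [Finset.sum_ite_eq' (decompose 𝒜 r).support (p - k) (fun m => (decompose 𝒜 r m : R) * x)]
    by_cases hmem : p - k ∈ (decompose 𝒜 r).support
    · rw [if_pos hmem]
    · rw [if_neg hmem, DFinsupp.notMem_support_iff.mp hmem]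
      simp
  · rw [if_neg hk]
    refine Finset.sum_eq_zero fun m _ => if_neg (by omega)

variable (𝒜) in
/-- The homogeneous component of degree `a : ℤ` (zero for negative `a`). -/
noncomputable def comp (a : ℤ) (r : R) : R :=
  if 0 ≤ a then (decompose 𝒜 r a.toNat : R) else 0

lemma comp_of_mem {p : ℕ} {r : R} (hr : r ∈ 𝒜 p) : comp 𝒜 (p : ℤ) r = r := by
  rw [comp, if_pos (by omega), Int.toNat_natCast, decompose_of_mem_same 𝒜 hr]

lemma comp_mem {a : ℤ} (ha : 0 ≤ a) (r : R) : comp 𝒜 a r ∈ 𝒜 a.toNat := by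
  rw [comp, if_pos ha]; exact SetLike.coe_mem _

lemma Fmem_comp (a : ℤ) (r : R) : Fmem 𝒜 a (comp 𝒜 a r) := by
  by_cases ha : 0 ≤ a
  · have := Fmem_of_mem (comp_mem (𝒜 := 𝒜) ha r)
    exact this.mono (by omega)
  · rw [comp, if_neg ha]; exact Fmem_zero 𝒜 a

lemma comp_eq_zero {a b : ℤ} {r : R} (hr : Fmem 𝒜 b r) (hb : b < a) : comp 𝒜 a r = 0 := by
  rw [comp]
  split
  · exact hr _ (by omega)
  · rfl

lemma Fmem_sub_comp {a : ℤ} {r : R} (hr : Fmem 𝒜 a r) : Fmem 𝒜 (a - 1) (r - comp 𝒜 a r) := by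
  intro p hp
  rw [decompose_sub]
  rw [show ((((decompose 𝒜 r - decompose 𝒜 (comp 𝒜 a r))) p : 𝒜 p) : R)
    = ((decompose 𝒜 r p : 𝒜 p) : R) - ((decompose 𝒜 (comp 𝒜 a r) p : 𝒜 p) : R) from rfl]
  by_cases hpa : a < (p : ℤ)
  · rw [hr p hpa, Fmem_comp a r p hpa, sub_zero]
  · have hpa' : (p : ℤ) = a := by omega
    have h0 : 0 ≤ a := by omega
    have hco : comp 𝒜 a r = (decompose 𝒜 r p : R) := by
      rw [comp, if_pos h0, show a.toNat = p from by omega]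
    rw [hco, decompose_of_mem_same 𝒜 (SetLike.coe_mem _), sub_self]

lemma comp_add (a : ℤ) (r s : R) : comp 𝒜 a (r + s) = comp 𝒜 a r + comp 𝒜 a s := by
  rw [comp, comp, comp]
  split
  · rw [decompose_add]; rfl
  · rw [add_zero]

lemma comp_sum {ι : Type*} (a : ℤ) (s : Finset ι) (f : ι → R) :
    comp 𝒜 a (∑ i ∈ s, f i) = ∑ i ∈ s, comp 𝒜 a (f i) := by
  classical
  induction s using Finset.induction_on with
  | empty => simp [comp]
  | @insert _ _ hx ih => rw [Finset.sum_insert hx, comp_add, ih, Finset.sum_insert hx]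

lemma comp_comp (a : ℤ) (r : R) : comp 𝒜 a (comp 𝒜 a r) = comp 𝒜 a r := by
  by_cases ha : 0 ≤ a
  · have := comp_mem (𝒜 := 𝒜) ha r
    calc comp 𝒜 a (comp 𝒜 a r) = comp 𝒜 ((a.toNat : ℕ) : ℤ) (comp 𝒜 a r) := by
          congr 1; omega
      _ = comp 𝒜 a r := comp_of_mem this
  · rw [comp, comp, if_neg ha, if_neg ha]

lemma comp_mul_homog {k : ℕ} {x : R} (hx : x ∈ 𝒜 k) (r : R) (a : ℤ) :
    comp 𝒜 a (r * x) = comp 𝒜 (a - k) r * x := by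
  by_cases ha : 0 ≤ a - k
  · have ha' : 0 ≤ a := by omega
    rw [comp, comp, if_pos ha, if_pos ha', decompose_mul_right hx,
      if_pos (by omega : k ≤ a.toNat), show a.toNat - k = (a - k).toNat by omega]
  · rw [comp, comp, if_neg ha, zero_mul]
    split
    · rw [decompose_mul_right hx, if_neg (by omega)]
    · rfl

lemma ofFn_take {n : ℕ} (x : Fin n → R) (l : ℕ) (hl : l ≤ n) :
    (List.ofFn x).take l = List.ofFn (fun j : Fin l => x (Fin.castLE hl j)) := by
  apply List.ext_getElem
  · simp [hl]
  · intro i h1 h2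
    simp [List.getElem_take, List.getElem_ofFn]

lemma span_take {n : ℕ} (x : Fin n → R) (l : ℕ) (hl : l ≤ n) :
    Ideal.span {y | y ∈ (List.ofFn x).take l}
      = Ideal.span (Set.range fun j : Fin l => x (Fin.castLE hl j)) := by
  rw [ofFn_take x l hl]
  congr 1
  ext yy
  simp [List.mem_ofFn]

lemma reg_step {n : ℕ} (x : Fin n → R) (hreg : IsRegularSeq (List.ofFn x)) {l : ℕ} (hl : l < n)
    (c : R) (hc : x ⟨l, hl⟩ * c ∈ Ideal.span (Set.range fun j : Fin l => x (Fin.castLE hl.le j))) :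
    c ∈ Ideal.span (Set.range fun j : Fin l => x (Fin.castLE hl.le j)) := by
  have h := hreg l (by simpa using hl) c
  rw [List.get_ofFn, span_take x l hl.le] at h
  exact h (by convert hc using 3; rfl)

lemma syzygy {n : ℕ} (x : Fin n → R) (hreg : IsRegularSeq (List.ofFn x)) :
    ∀ (l : ℕ) (hl : l ≤ n) (c : Fin l → R),
      (∑ i, c i * x (Fin.castLE hl i)) = 0 →
      ∃ d : Fin l → Fin l → R, (∀ i, d i i = 0) ∧ (∀ i j, d i j = - d j i) ∧
        ∀ i, c i = ∑ j, d i j * x (Fin.castLE hl j) := by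
  intro l
  induction l with
  | zero =>
    intro hl c _
    exact ⟨fun _ _ => 0, fun _ => rfl, fun _ _ => neg_zero.symm, fun i => i.elim0⟩
  | succ l ih =>
    intro hl c hc
    have hln : l < n := by omega
    rw [Fin.sum_univ_castSucc] at hc
    have hmem : x ⟨l, hln⟩ * c (Fin.last l)
        ∈ Ideal.span (Set.range fun j : Fin l => x (Fin.castLE hln.le j)) := by
      have : x ⟨l, hln⟩ * c (Fin.last l)
          = -(∑ i : Fin l, c (Fin.castSucc i) * x (Fin.castLE hl (Fin.castSucc i))) := by
        have := hc
        have hx : x (Fin.castLE hl (Fin.last l)) = x ⟨l, hln⟩ := rfl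
        rw [hx] at this
        linear_combination this
      rw [this]
      refine neg_mem (Ideal.sum_mem _ fun i _ => Ideal.mul_mem_left _ _ ?_)
      exact Ideal.subset_span ⟨i, rfl⟩
    have hclast := reg_step x hreg hln _ hmem
    obtain ⟨e, he⟩ := (Submodule.mem_span_range_iff_exists_fun R).mp hclast
    simp only [smul_eq_mul] at he
    have hc' : (∑ i : Fin l, (c (Fin.castSucc i) + e i * x ⟨l, hln⟩) * x (Fin.castLE hln.le i))
        = 0 := by
      have expand : ∀ i : Fin l, (c (Fin.castSucc i) + e i * x ⟨l, hln⟩) * x (Fin.castLE hln.le i)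
          = c (Fin.castSucc i) * x (Fin.castLE hl (Fin.castSucc i))
            + x ⟨l, hln⟩ * (e i * x (Fin.castLE hln.le i)) := by
        intro i
        have : x (Fin.castLE hl (Fin.castSucc i)) = x (Fin.castLE hln.le i) := rfl
        rw [this]; ring
      rw [Finset.sum_congr rfl fun i _ => expand i, Finset.sum_add_distrib, ← Finset.mul_sum, he]
      have hx : x (Fin.castLE hl (Fin.last l)) = x ⟨l, hln⟩ := rfl
      rw [hx] at hc
      linear_combination hc
    obtain ⟨d₀, hdiag, hanti, hform⟩ := ih hln.le _ hc'
    refine ⟨Fin.snoc (fun i₀ => Fin.snoc (d₀ i₀) (-e i₀)) (Fin.snoc e 0), ?_, ?_, ?_⟩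
    · intro i
      induction i using Fin.lastCases with
      | last => simp
      | cast i₀ => simp [hdiag]
    · intro i j
      induction i using Fin.lastCases with
      | last =>
        induction j using Fin.lastCases with
        | last => simp
        | cast j₀ => simp
      | cast i₀ =>
        induction j using Fin.lastCases with
        | last => simp
        | cast j₀ => simp [hanti i₀ j₀]
    · intro i
      induction i using Fin.lastCases with
      | last =>
        rw [Fin.sum_univ_castSucc]
        simp only [Fin.snoc_last, Fin.snoc_castSucc]
        rw [zero_mul, add_zero, ← he]
        exact Finset.sum_congr rfl fun j _ => rfl
      | cast i₀ =>
        rw [Fin.sum_univ_castSucc]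
        simp only [Fin.snoc_last, Fin.snoc_castSucc]
        have h1 : ∀ j : Fin l, d₀ i₀ j * x (Fin.castLE hl (Fin.castSucc j))
            = d₀ i₀ j * x (Fin.castLE hln.le j) := fun j => rfl
        rw [Finset.sum_congr rfl fun j _ => h1 j, ← hform i₀]
        have : x (Fin.castLE hl (Fin.last l)) = x ⟨l, hln⟩ := rfl
        rw [this]; ring

lemma comp_zero (a : ℤ) : comp 𝒜 a (0 : R) = 0 := by
  rw [comp]; split <;> simp

lemma comp_neg (a : ℤ) (r : R) : comp 𝒜 a (-r) = - comp 𝒜 a r := by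
  rw [comp, comp]
  split
  · rw [decompose_neg]; rfl
  · rw [neg_zero]

lemma descent {n : ℕ} (x y : Fin n → R) (k : Fin n → ℕ)
    (hx : ∀ i, x i ∈ 𝒜 (k i))
    (hxy : ∀ i, Fmem 𝒜 ((k i : ℤ) - 1) (y i - x i))
    (hreg : IsRegularSeq (List.ofFn x))
    {l : ℕ} (hl : l ≤ n) (a : ℤ) :
    ∀ (m : ℕ) (s : R), Fmem 𝒜 a s →
      ∀ b : Fin l → R, (∀ i, Fmem 𝒜 (a + m - k (Fin.castLE hl i)) (b i)) →
        (∑ i, b i * y (Fin.castLE hl i)) = s →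
        ∃ b' : Fin l → R, (∀ i, Fmem 𝒜 (a - k (Fin.castLE hl i)) (b' i)) ∧
          (∑ i, b' i * y (Fin.castLE hl i)) = s := by
  intro m
  induction m with
  | zero =>
    intro s _ b hb hsum
    exact ⟨b, fun i => (hb i).mono (by push_cast; omega), hsum⟩
  | succ m ihm =>
    intro s hs b hb hsum
    set N : ℤ := a + m + 1 with hN
    have hbN : ∀ i, Fmem 𝒜 (N - k (Fin.castLE hl i)) (b i) := by
      intro i
      exact (hb i).mono (by push_cast; omega)
    set c : Fin l → R := fun i => comp 𝒜 (N - k (Fin.castLE hl i)) (b i) with hc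
    -- Σ c i * x i = 0
    have hcx : (∑ i, c i * x (Fin.castLE hl i)) = 0 := by
      have h0 : comp 𝒜 N s = 0 := comp_eq_zero hs (by omega)
      have h1 : comp 𝒜 N s = ∑ i, c i * x (Fin.castLE hl i) := by
        rw [← hsum, comp_sum]
        refine Finset.sum_congr rfl fun i _ => ?_
        have hsplit : b i * y (Fin.castLE hl i)
            = b i * x (Fin.castLE hl i) + b i * (y (Fin.castLE hl i) - x (Fin.castLE hl i)) := by
          ring
        rw [hsplit, comp_add, comp_mul_homog (hx _),
          comp_eq_zero ((hbN i).mul (hxy (Fin.castLE hl i))) (by omega), add_zero]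
      rw [← h1, h0]
    obtain ⟨d, hdiag, hanti, hform⟩ := syzygy x hreg l hl c hcx
    set d' : Fin l → Fin l → R := fun i j =>
      comp 𝒜 (N - k (Fin.castLE hl i) - k (Fin.castLE hl j)) (d i j) with hd'
    have hd'anti : ∀ i j, d' i j = - d' j i := by
      intro i j
      rw [hd']
      simp only
      rw [hanti i j, comp_neg,
        show N - (k (Fin.castLE hl i) : ℤ) - k (Fin.castLE hl j)
          = N - k (Fin.castLE hl j) - k (Fin.castLE hl i) by ring]
    have hd'diag : ∀ i, d' i i = 0 := by
      intro i
      rw [hd']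
      simp only
      rw [hdiag i, comp_zero]
    have hform' : ∀ i, c i = ∑ j, d' i j * x (Fin.castLE hl j) := by
      intro i
      have h2 : c i = comp 𝒜 (N - k (Fin.castLE hl i)) (c i) := (comp_comp _ _).symm
      rw [h2, hform i, comp_sum]
      exact Finset.sum_congr rfl fun j _ => comp_mul_homog (hx _) _ _
    set b₂ : Fin l → R := fun i =>
      (b i - c i) - ∑ j, d' i j * (y (Fin.castLE hl j) - x (Fin.castLE hl j)) with hb₂
    have hb₂mem : ∀ i, Fmem 𝒜 (a + m - k (Fin.castLE hl i)) (b₂ i) := by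
      intro i
      have h1 : Fmem 𝒜 (N - k (Fin.castLE hl i) - 1) (b i - c i) := Fmem_sub_comp (hbN i)
      have h2 : Fmem 𝒜 (N - k (Fin.castLE hl i) - 1)
          (∑ j, d' i j * (y (Fin.castLE hl j) - x (Fin.castLE hl j))) := by
        refine Fmem_sum _ _ fun j _ => ?_
        have := (Fmem_comp (𝒜 := 𝒜) (N - k (Fin.castLE hl i) - k (Fin.castLE hl j)) (d i j)).mul
          (hxy (Fin.castLE hl j))
        exact this.mono (by omega)
      exact (h1.sub h2).mono (by push_cast; omega)
    have hzero : (∑ i, (c i * y (Fin.castLE hl i)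
        + (∑ j, d' i j * (y (Fin.castLE hl j) - x (Fin.castLE hl j))) * y (Fin.castLE hl i)))
        = 0 := by
      have hyy : (∑ i, (c i * y (Fin.castLE hl i)
          + (∑ j, d' i j * (y (Fin.castLE hl j) - x (Fin.castLE hl j))) * y (Fin.castLE hl i)))
          = ∑ i, ∑ j, d' i j * y (Fin.castLE hl j) * y (Fin.castLE hl i) := by
        refine Finset.sum_congr rfl fun i _ => ?_
        rw [hform' i, Finset.sum_mul, Finset.sum_mul, ← Finset.sum_add_distrib]
        exact Finset.sum_congr rfl fun j _ => by ring
      rw [hyy, ← Finset.sum_product']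
      refine Finset.sum_ninvolution Prod.swap ?_ ?_
        (fun p => Finset.mem_product.mpr ⟨Finset.mem_univ _, Finset.mem_univ _⟩)
        (fun p => Prod.swap_swap p)
      · intro p
        simp only [Prod.fst_swap, Prod.snd_swap]
        rw [hd'anti p.2 p.1]
        ring
      · intro p hp h
        apply hp
        have : p.2 = p.1 := congrArg Prod.fst h
        rw [this, hd'diag, zero_mul, zero_mul]
    have hsum₂ : (∑ i, b₂ i * y (Fin.castLE hl i)) = s := by
      have expand : (∑ i, b₂ i * y (Fin.castLE hl i))
          = (∑ i, b i * y (Fin.castLE hl i))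
            - ∑ i, (c i * y (Fin.castLE hl i)
              + (∑ j, d' i j * (y (Fin.castLE hl j) - x (Fin.castLE hl j)))
                * y (Fin.castLE hl i)) := by
        rw [← Finset.sum_sub_distrib]
        exact Finset.sum_congr rfl fun i _ => by rw [hb₂]; ring
      rw [expand, hzero, sub_zero, hsum]
    have := ihm s hs b₂ (fun i => (hb₂mem i).mono (by push_cast; omega)) hsum₂
    exact this

lemma comp_sub (a : ℤ) (r s : R) : comp 𝒜 a (r - s) = comp 𝒜 a r - comp 𝒜 a s := by
  rw [sub_eq_add_neg, comp_add, comp_neg, sub_eq_add_neg]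

end Aux

/-- Proposition 4.2: with notation as in Lemma 4.1 and `1 ≤ l ≤ n`, let
`q_l : R → R/(y₁,…,y_l)` and `F^aR_l := q_l(F^aR)`.  For every `a`, the additive map
`R_a → F^aR_l / F^{a-1}R_l` induced by `q_l` is surjective with kernel
`R_a ∩ (x₁,…,x_l)`; in particular `R_a/(R_a ∩ (x₁,…,x_l)) ≅ F^aR_l / F^{a-1}R_l`.
Surjectivity: for `z ∈ F^aR` there are `w ∈ R_a` and `z' ∈ F^{a-1}R` with
`z - w - z' ∈ (y₁,…,y_l)`.  Kernel: for `w ∈ R_a`, `q_l(w) ∈ F^{a-1}R_l` iff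
`w ∈ (x₁,…,x_l)`. -/
theorem stmt_5 {R : Type*} [CommRing R] (𝒜 : ℕ → AddSubgroup R) [GradedRing 𝒜]
    (n : ℕ) (x y : Fin n → R) (k : Fin n → ℕ)
    (hx : ∀ i, x i ∈ 𝒜 (k i))
    (hxy : ∀ i, Fmem 𝒜 ((k i : ℤ) - 1) (y i - x i))
    (hreg : ∀ l : List R, l.Perm (List.ofFn x) → IsRegularSeq l)
    (l : ℕ) (hl1 : 1 ≤ l) (hl : l ≤ n) (a : ℕ) :
    (∀ z : R, Fmem 𝒜 (a : ℤ) z →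
      ∃ w ∈ 𝒜 a, ∃ z' : R, Fmem 𝒜 ((a : ℤ) - 1) z' ∧
        z - w - z' ∈ Ideal.span (Set.range fun i : Fin l => y (Fin.castLE hl i))) ∧
    (∀ w : R, w ∈ 𝒜 a →
      ((∃ z' : R, Fmem 𝒜 ((a : ℤ) - 1) z' ∧
          w - z' ∈ Ideal.span (Set.range fun i : Fin l => y (Fin.castLE hl i))) ↔
        w ∈ Ideal.span (Set.range fun i : Fin l => x (Fin.castLE hl i)))) := by
  have hregx : IsRegularSeq (List.ofFn x) := hreg _ (List.Perm.refl _)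
  constructor
  · intro z hz
    refine ⟨comp 𝒜 (a : ℤ) z, ?_, z - comp 𝒜 (a : ℤ) z, Fmem_sub_comp hz, ?_⟩
    · have h := comp_mem (𝒜 := 𝒜) (by omega : (0:ℤ) ≤ (a : ℤ)) z
      rwa [Int.toNat_natCast] at h
    · rw [show z - comp 𝒜 (a : ℤ) z - (z - comp 𝒜 (a : ℤ) z) = 0 by ring]
      exact Ideal.zero_mem _
  · intro w hw
    constructor
    · rintro ⟨z', hz', hwz⟩
      obtain ⟨b, hb⟩ := (Submodule.mem_span_range_iff_exists_fun R).mp hwz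
      simp only [smul_eq_mul] at hb
      choose mm hmm using fun i : Fin l => Fmem_exists_nat (𝒜 := 𝒜) (b i)
      set M : ℕ := Finset.univ.sup (fun i : Fin l => mm i + k (Fin.castLE hl i)) with hM
      have hs : Fmem 𝒜 (a : ℤ) (w - z') :=
        (Fmem_of_mem hw).sub (hz'.mono (by omega))
      have hbm : ∀ i, Fmem 𝒜 ((a : ℤ) + M - k (Fin.castLE hl i)) (b i) := by
        intro i
        refine (hmm i).mono ?_
        have : mm i + k (Fin.castLE hl i) ≤ M :=
          Finset.le_sup (f := fun i : Fin l => mm i + k (Fin.castLE hl i)) (Finset.mem_univ i)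
        push_cast
        omega
      obtain ⟨b', hb'mem, hb'sum⟩ :=
        descent x y k hx hxy hregx hl (a : ℤ) M (w - z') hs b hbm hb
      have hwcomp : w = comp 𝒜 (a : ℤ) (w - z') := by
        rw [comp_sub, comp_eq_zero hz' (by omega), sub_zero, comp_of_mem hw]
      have hw' : w = ∑ i, comp 𝒜 ((a : ℤ) - k (Fin.castLE hl i)) (b' i) * x (Fin.castLE hl i) := by
        rw [hwcomp, ← hb'sum, comp_sum]
        refine Finset.sum_congr rfl fun i _ => ?_
        have hsplit : b' i * y (Fin.castLE hl i)
            = b' i * x (Fin.castLE hl i) + b' i * (y (Fin.castLE hl i) - x (Fin.castLE hl i)) := by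
          ring
        rw [hsplit, comp_add, comp_mul_homog (hx _),
          comp_eq_zero ((hb'mem i).mul (hxy (Fin.castLE hl i))) (by omega), add_zero]
      rw [hw']
      exact Ideal.sum_mem _ fun i _ =>
        Ideal.mul_mem_left _ _ (Ideal.subset_span ⟨i, rfl⟩)
    · intro hwx
      obtain ⟨cc, hcc⟩ := (Submodule.mem_span_range_iff_exists_fun R).mp hwx
      simp only [smul_eq_mul] at hcc
      set c' : Fin l → R := fun i => comp 𝒜 ((a : ℤ) - k (Fin.castLE hl i)) (cc i) with hc'
      have hw' : w = ∑ i, c' i * x (Fin.castLE hl i) := by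
        rw [show w = comp 𝒜 (a : ℤ) w from (comp_of_mem hw).symm, ← hcc, comp_sum]
        exact Finset.sum_congr rfl fun i _ => comp_mul_homog (hx _) _ _
      refine ⟨-(∑ i, c' i * (y (Fin.castLE hl i) - x (Fin.castLE hl i))), ?_, ?_⟩
      · refine (Fmem_sum _ _ fun i _ => ?_).neg
        exact ((Fmem_comp (𝒜 := 𝒜) _ (cc i)).mul (hxy (Fin.castLE hl i))).mono (by omega)
      · rw [sub_neg_eq_add, hw', ← Finset.sum_add_distrib]
        have : ∀ i : Fin l, c' i * x (Fin.castLE hl i)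
            + c' i * (y (Fin.castLE hl i) - x (Fin.castLE hl i)) = c' i * y (Fin.castLE hl i) :=
          fun i => by ring
        rw [Finset.sum_congr rfl fun i _ => this i]
        exact Ideal.sum_mem _ fun i _ =>
          Ideal.mul_mem_left _ _ (Ideal.subset_span ⟨i, rfl⟩)
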